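/- arXiv:2302.07193 — 2 statements merged into one kernel-verified Lean document; each statement's English description precedes it below -/
import Mathlib

section
/- Let A and B be d×d complex matrices such that the pair (A,B) has maximal rank and A B† is Hermitian. Then the following are equivalent: (1) the vertex scattering matrix σ(k) = −(A + ikB)⁻¹(A − ikB) is the same matrix for all nonzero real k; (2) A B† = 0; (3) there exists a nonzero real k such that σ(k)² = I; (4) σ(k)² = I for all nonzero real k. -/
open Matrix

/-- The vertex scattering matrix σ(k) = −(A + ikB)⁻¹(A − ikB). -/
noncomputable def vertexScattering {d : ℕ} (A B : Matrix (Fin d) (Fin d) ℂ) (k : ℝ) :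
    Matrix (Fin d) (Fin d) ℂ :=
  -((A + (Complex.I * (k : ℂ)) • B)⁻¹ * (A - (Complex.I * (k : ℂ)) • B))

namespace QGaux

open ComplexOrder

variable {d : ℕ}

/-- `W A B j = A + i j B`. -/
noncomputable def W (A B : Matrix (Fin d) (Fin d) ℂ) (j : ℝ) : Matrix (Fin d) (Fin d) ℂ :=
  A + (Complex.I * (j : ℂ)) • B

/-- `P A B j = A Aᴴ + j² B Bᴴ`. -/
noncomputable def P (A B : Matrix (Fin d) (Fin d) ℂ) (j : ℝ) : Matrix (Fin d) (Fin d) ℂ :=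
  A * Aᴴ + ((j * j : ℝ) : ℂ) • (B * Bᴴ)

variable (A B : Matrix (Fin d) (Fin d) ℂ)

lemma W_neg (j : ℝ) : W A B (-j) = A - (Complex.I * (j : ℂ)) • B := by
  unfold W
  push_cast
  rw [mul_neg, neg_smul, ← sub_eq_add_neg]

lemma vs_eq (k : ℝ) : vertexScattering A B k = -((W A B k)⁻¹ * W A B (-k)) := by
  rw [vertexScattering, W_neg, W]

lemma P_neg (j : ℝ) : P A B (-j) = P A B j := by
  unfold P; rw [neg_mul_neg]

lemma W_conjT (j : ℝ) : (W A B j)ᴴ = Aᴴ + (-(Complex.I * (j : ℂ))) • Bᴴ := by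
  unfold W
  rw [conjTranspose_add, conjTranspose_smul]
  congr 2
  simp [Complex.ext_iff]

lemma expand_mul (x y : ℂ) :
    (A + x • B) * (Aᴴ + y • Bᴴ)
      = A * Aᴴ + (x * y) • (B * Bᴴ) + (x • (B * Aᴴ) + y • (A * Bᴴ)) := by
  simp only [add_mul, mul_add, Matrix.smul_mul, Matrix.mul_smul, smul_smul, mul_comm y x]
  abel

lemma hBA (hherm : (A * Bᴴ).IsHermitian) : B * Aᴴ = A * Bᴴ := by
  have h := hherm
  rw [Matrix.IsHermitian, conjTranspose_mul, conjTranspose_conjTranspose] at h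
  exact h

lemma W_mul_WH (hherm : (A * Bᴴ).IsHermitian) (j₁ j₂ : ℝ) :
    W A B j₁ * (W A B j₂)ᴴ
      = A * Aᴴ + ((j₁ * j₂ : ℝ) : ℂ) • (B * Bᴴ)
          + (Complex.I * ((j₁ - j₂ : ℝ) : ℂ)) • (A * Bᴴ) := by
  rw [W, W_conjT, expand_mul, hBA A B hherm, ← add_smul]
  congr 2
  · push_cast
    rw [mul_neg]
    rw [show Complex.I * (j₁:ℂ) * (Complex.I * (j₂:ℂ))
          = Complex.I * Complex.I * ((j₁:ℂ) * (j₂:ℂ)) by ring, Complex.I_mul_I]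
    ring
  · push_cast
    ring

lemma isUnit_R (hrank : (fromCols A B).rank = d) :
    IsUnit (A * Aᴴ + B * Bᴴ) := by
  have h1 : (fromCols A B) * (fromCols A B)ᴴ = A * Aᴴ + B * Bᴴ := by
    rw [conjTranspose_fromCols_eq_fromRows_conjTranspose, fromCols_mul_fromRows]
  have h2 : (A * Aᴴ + B * Bᴴ).rank = d := by
    rw [← h1, rank_self_mul_conjTranspose, hrank]
  rw [← Matrix.mulVec_surjective_iff_isUnit]
  have h3 : LinearMap.range (A * Aᴴ + B * Bᴴ).mulVecLin = ⊤ := by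
    apply Submodule.eq_top_of_finrank_eq
    rw [Module.finrank_pi]
    simpa [Matrix.rank] using h2
  intro v
  obtain ⟨w, hw⟩ := LinearMap.range_eq_top.mp h3 v
  exact ⟨w, hw⟩

lemma isUnit_P (hrank : (fromCols A B).rank = d) {k : ℝ} (hk : k ≠ 0) :
    IsUnit (P A B k) := by
  rw [P]
  have hsmul : ((k * k : ℝ) : ℂ) • (B * Bᴴ) = ((k : ℂ) • B) * ((k : ℂ) • B)ᴴ := by
    rw [conjTranspose_smul, Matrix.smul_mul, Matrix.mul_smul, smul_smul]
    congr 1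
    simp [Complex.ext_iff]
  have hps1 : (A * Aᴴ).PosSemidef := posSemidef_self_mul_conjTranspose A
  have hps2 : (((k * k : ℝ) : ℂ) • (B * Bᴴ)).PosSemidef := by
    rw [hsmul]; exact posSemidef_self_mul_conjTranspose _
  rw [← Matrix.mulVec_injective_iff_isUnit]
  have key : ∀ z, (A * Aᴴ + ((k * k : ℝ) : ℂ) • (B * Bᴴ)) *ᵥ z = 0 → z = 0 := by
    intro z hz
    have hdot : star z ⬝ᵥ (A * Aᴴ) *ᵥ z + star z ⬝ᵥ (((k * k : ℝ) : ℂ) • (B * Bᴴ)) *ᵥ z = 0 := by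
      rw [← dotProduct_add, ← add_mulVec, hz, dotProduct_zero]
    have h1 : star z ⬝ᵥ (A * Aᴴ) *ᵥ z = 0 := by
      have a1 := hps1.dotProduct_mulVec_nonneg z
      have a2 := hps2.dotProduct_mulVec_nonneg z
      have hle : star z ⬝ᵥ (A * Aᴴ) *ᵥ z ≤ 0 := by
        calc star z ⬝ᵥ (A * Aᴴ) *ᵥ z
            ≤ star z ⬝ᵥ (A * Aᴴ) *ᵥ z + star z ⬝ᵥ (((k * k : ℝ) : ℂ) • (B * Bᴴ)) *ᵥ z :=
              le_add_of_nonneg_right a2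
          _ = 0 := hdot
      exact le_antisymm hle a1
    have h2 : star z ⬝ᵥ (((k * k : ℝ) : ℂ) • (B * Bᴴ)) *ᵥ z = 0 := by
      rw [h1, zero_add] at hdot; exact hdot
    have hA0 : (A * Aᴴ) *ᵥ z = 0 := (hps1.dotProduct_mulVec_zero_iff z).mp h1
    have hB0' : (((k * k : ℝ) : ℂ) • (B * Bᴴ)) *ᵥ z = 0 :=
      (hps2.dotProduct_mulVec_zero_iff z).mp h2
    have hB0 : (B * Bᴴ) *ᵥ z = 0 := by
      rw [smul_mulVec] at hB0'
      have hk2 : ((k * k : ℝ) : ℂ) ≠ 0 := by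
        simp [Complex.ext_iff, mul_self_ne_zero, hk]
      exact (smul_eq_zero.mp hB0').resolve_left hk2
    have hR : (A * Aᴴ + B * Bᴴ) *ᵥ z = 0 := by
      rw [add_mulVec, hA0, hB0, add_zero]
    have hinj := Matrix.mulVec_injective_iff_isUnit.mpr (isUnit_R A B hrank)
    exact hinj (a₁ := z) (a₂ := 0) (by rw [hR, mulVec_zero])
  intro x y hxy
  have hsub : (A * Aᴴ + ((k * k : ℝ) : ℂ) • (B * Bᴴ)) *ᵥ (x - y) = 0 := by
    rw [mulVec_sub, hxy, sub_self]
  exact sub_eq_zero.mp (key _ hsub)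

variable (hrank : (fromCols A B).rank = d) (hherm : (A * Bᴴ).IsHermitian)

include hrank hherm

lemma W_mul_WH_self {j : ℝ} : W A B j * (W A B j)ᴴ = P A B j := by
  rw [W_mul_WH A B hherm, P]
  simp

lemma isUnit_W {j : ℝ} (hj : j ≠ 0) : IsUnit (W A B j) := by
  have hPd : IsUnit (P A B j).det :=
    (Matrix.isUnit_iff_isUnit_det _).mp (isUnit_P A B hrank hj)
  apply IsUnit.of_mul_eq_one ((W A B j)ᴴ * (P A B j)⁻¹)
  rw [← Matrix.mul_assoc, W_mul_WH_self A B hrank hherm, Matrix.mul_nonsing_inv _ hPd]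

lemma det_W {j : ℝ} (hj : j ≠ 0) : IsUnit (W A B j).det :=
  (Matrix.isUnit_iff_isUnit_det _).mp (isUnit_W A B hrank hherm hj)

lemma det_WH {j : ℝ} (hj : j ≠ 0) : IsUnit ((W A B j)ᴴ).det := by
  rw [Matrix.det_conjTranspose]
  exact (det_W A B hrank hherm hj).star

lemma inv_W {j : ℝ} (hj : j ≠ 0) : (W A B j)⁻¹ = (W A B j)ᴴ * (P A B j)⁻¹ := by
  have hPd : IsUnit (P A B j).det :=
    (Matrix.isUnit_iff_isUnit_det _).mp (isUnit_P A B hrank hj)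
  apply Matrix.inv_eq_right_inv
  rw [← Matrix.mul_assoc, W_mul_WH_self A B hrank hherm, Matrix.mul_nonsing_inv _ hPd]

/-- The commutation identity `D Cᴴ' = C Dᴴ'` when `A Bᴴ = 0`. -/
lemma cross_eq (hM : A * Bᴴ = 0) (k k' : ℝ) :
    W A B (-k) * (W A B k')ᴴ = W A B k * (W A B (-k'))ᴴ := by
  rw [W_mul_WH A B hherm, W_mul_WH A B hherm, hM, smul_zero, smul_zero, neg_mul_comm]

/-- With `A Bᴴ = 0`, `σ(k) σ(k') = 1`. -/
lemma sigma_mul (hM : A * Bᴴ = 0) {k k' : ℝ} (hk : k ≠ 0) (hk' : k' ≠ 0) :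
    vertexScattering A B k * vertexScattering A B k' = 1 := by
  have hWk := det_W A B hrank hherm hk
  have hWk' := det_W A B hrank hherm hk'
  have hWnk' := det_W A B hrank hherm (neg_ne_zero.mpr hk')
  have key : W A B (-k) * (W A B k')⁻¹ = W A B k * (W A B (-k'))⁻¹ := by
    rw [inv_W A B hrank hherm hk', inv_W A B hrank hherm (neg_ne_zero.mpr hk'), P_neg,
      ← Matrix.mul_assoc, ← Matrix.mul_assoc, cross_eq A B hrank hherm hM k k']
  rw [vs_eq, vs_eq, neg_mul_neg]
  calc (W A B k)⁻¹ * W A B (-k) * ((W A B k')⁻¹ * W A B (-k'))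
      = (W A B k)⁻¹ * (W A B (-k) * (W A B k')⁻¹) * W A B (-k') := by
        rw [Matrix.mul_assoc, Matrix.mul_assoc, Matrix.mul_assoc]
    _ = (W A B k)⁻¹ * (W A B k * (W A B (-k'))⁻¹) * W A B (-k') := by rw [key]
    _ = ((W A B k)⁻¹ * W A B k) * ((W A B (-k'))⁻¹ * W A B (-k')) := by
        rw [Matrix.mul_assoc, Matrix.mul_assoc, Matrix.mul_assoc]
    _ = 1 := by rw [Matrix.nonsing_inv_mul _ hWk, Matrix.nonsing_inv_mul _ hWnk', Matrix.mul_one]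

/-- σ(k) is unitary: `σ(k) σ(k)ᴴ = 1`. -/
lemma sigma_unitary {k : ℝ} (hk : k ≠ 0) :
    vertexScattering A B k * (vertexScattering A B k)ᴴ = 1 := by
  have hWk := det_W A B hrank hherm hk
  have hWkH := det_WH A B hrank hherm hk
  rw [vs_eq, conjTranspose_neg, neg_mul_neg, conjTranspose_mul,
    Matrix.conjTranspose_nonsing_inv]
  calc (W A B k)⁻¹ * W A B (-k) * ((W A B (-k))ᴴ * ((W A B k)ᴴ)⁻¹)
      = (W A B k)⁻¹ * (W A B (-k) * (W A B (-k))ᴴ) * ((W A B k)ᴴ)⁻¹ := by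
        simp only [Matrix.mul_assoc]
    _ = (W A B k)⁻¹ * (W A B k * (W A B k)ᴴ) * ((W A B k)ᴴ)⁻¹ := by
        rw [W_mul_WH_self A B hrank hherm, W_mul_WH_self A B hrank hherm, P_neg]
    _ = ((W A B k)⁻¹ * W A B k) * ((W A B k)ᴴ * ((W A B k)ᴴ)⁻¹) := by
        rw [Matrix.mul_assoc, Matrix.mul_assoc, Matrix.mul_assoc]
    _ = 1 := by rw [Matrix.nonsing_inv_mul _ hWk, Matrix.mul_nonsing_inv _ hWkH, Matrix.mul_one]

/-- σ(k) is Hermitian iff `A Bᴴ = 0`. -/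
lemma sigma_herm_iff {k : ℝ} (hk : k ≠ 0) :
    vertexScattering A B k = (vertexScattering A B k)ᴴ ↔ A * Bᴴ = 0 := by
  have hWk := det_W A B hrank hherm hk
  have hWkH := det_WH A B hrank hherm hk
  rw [vs_eq, conjTranspose_neg, conjTranspose_mul, Matrix.conjTranspose_nonsing_inv, neg_inj]
  constructor
  · intro h
    have h2 : W A B (-k) * (W A B k)ᴴ = W A B k * (W A B (-k))ᴴ := by
      calc W A B (-k) * (W A B k)ᴴ
          = W A B k * ((W A B k)⁻¹ * W A B (-k)) * (W A B k)ᴴ := by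
            rw [← Matrix.mul_assoc, Matrix.mul_nonsing_inv _ hWk, Matrix.one_mul]
        _ = W A B k * ((W A B (-k))ᴴ * ((W A B k)ᴴ)⁻¹) * (W A B k)ᴴ := by rw [h]
        _ = W A B k * (W A B (-k))ᴴ * (((W A B k)ᴴ)⁻¹ * (W A B k)ᴴ) := by
            rw [Matrix.mul_assoc, Matrix.mul_assoc, Matrix.mul_assoc]
        _ = W A B k * (W A B (-k))ᴴ := by
            rw [Matrix.nonsing_inv_mul _ hWkH, Matrix.mul_one]
    rw [W_mul_WH A B hherm, W_mul_WH A B hherm, neg_mul_comm] at h2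
    have h3 : (Complex.I * ((-k - k : ℝ) : ℂ)) • (A * Bᴴ)
        = (Complex.I * ((k - -k : ℝ) : ℂ)) • (A * Bᴴ) := add_left_cancel h2
    have h4 : ((Complex.I * ((k - -k : ℝ) : ℂ)) - (Complex.I * ((-k - k : ℝ) : ℂ))) • (A * Bᴴ)
        = 0 := by rw [sub_smul, h3, sub_self]
    have h5 : ((Complex.I * ((k - -k : ℝ) : ℂ)) - (Complex.I * ((-k - k : ℝ) : ℂ))) ≠ 0 := by
      simp only [← mul_sub]
      apply mul_ne_zero Complex.I_ne_zero
      rw [sub_ne_zero]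
      intro hcon
      apply hk
      have := Complex.ofReal_injective hcon
      linarith
    exact (smul_eq_zero.mp h4).resolve_left h5
  · intro hM
    have h2 : W A B (-k) * (W A B k)ᴴ = W A B k * (W A B (-k))ᴴ :=
      cross_eq A B hrank hherm hM k k
    calc (W A B k)⁻¹ * W A B (-k)
        = (W A B k)⁻¹ * (W A B (-k) * (W A B k)ᴴ) * ((W A B k)ᴴ)⁻¹ := by
          rw [Matrix.mul_assoc ((W A B k)⁻¹), Matrix.mul_assoc,
            Matrix.mul_nonsing_inv _ hWkH, Matrix.mul_one]
      _ = (W A B k)⁻¹ * (W A B k * (W A B (-k))ᴴ) * ((W A B k)ᴴ)⁻¹ := by rw [h2]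
      _ = (W A B (-k))ᴴ * ((W A B k)ᴴ)⁻¹ := by
          rw [← Matrix.mul_assoc, Matrix.nonsing_inv_mul _ hWk, Matrix.one_mul]

/-- `σ(k)² = 1 ↔ A Bᴴ = 0`. -/
lemma sigma_sq_iff {k : ℝ} (hk : k ≠ 0) :
    (vertexScattering A B k) ^ 2 = 1 ↔ A * Bᴴ = 0 := by
  have hu := sigma_unitary A B hrank hherm hk
  rw [pow_two]
  constructor
  · intro h
    refine (sigma_herm_iff A B hrank hherm hk).mp ?_
    calc vertexScattering A B k
        = vertexScattering A B k * 1 := (Matrix.mul_one _).symm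
      _ = vertexScattering A B k * (vertexScattering A B k * (vertexScattering A B k)ᴴ) := by
          rw [hu]
      _ = (vertexScattering A B k * vertexScattering A B k) * (vertexScattering A B k)ᴴ := by
          rw [Matrix.mul_assoc]
      _ = (vertexScattering A B k)ᴴ := by rw [h, Matrix.one_mul]
  · intro hM
    have hs := (sigma_herm_iff A B hrank hherm hk).mpr hM
    nth_rewrite 2 [hs]
    exact hu

end QGaux

open QGaux

theorem k_independence_tfae {d : ℕ}
    (A B : Matrix (Fin d) (Fin d) ℂ)
    (hrank : (Matrix.fromCols A B).rank = d)
    (hherm : (A * Bᴴ).IsHermitian) :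
    [ (∀ k₁ k₂ : ℝ, k₁ ≠ 0 → k₂ ≠ 0 →
        vertexScattering A B k₁ = vertexScattering A B k₂),
      A * Bᴴ = 0,
      (∃ k : ℝ, k ≠ 0 ∧ (vertexScattering A B k) ^ 2 = 1),
      (∀ k : ℝ, k ≠ 0 → (vertexScattering A B k) ^ 2 = 1) ].TFAE := by
  tfae_have 2 → 4 := by
    intro hM k hk
    exact (sigma_sq_iff A B hrank hherm hk).mpr hM
  tfae_have 4 → 3 := by
    intro h4
    exact ⟨1, one_ne_zero, h4 1 one_ne_zero⟩
  tfae_have 3 → 2 := by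
    rintro ⟨k, hk, hsq⟩
    exact (sigma_sq_iff A B hrank hherm hk).mp hsq
  tfae_have 2 → 1 := by
    intro hM k₁ k₂ hk₁ hk₂
    have h1 := sigma_mul A B hrank hherm hM hk₁ hk₂
    have h2 := (sigma_sq_iff A B hrank hherm hk₂).mpr hM
    rw [pow_two] at h2
    calc vertexScattering A B k₁
        = vertexScattering A B k₁ * (vertexScattering A B k₂ * vertexScattering A B k₂) := by
          rw [h2, Matrix.mul_one]
      _ = (vertexScattering A B k₁ * vertexScattering A B k₂) * vertexScattering A B k₂ := by
          rw [Matrix.mul_assoc]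
      _ = vertexScattering A B k₂ := by rw [h1, Matrix.one_mul]
  tfae_have 1 → 3 := by
    intro h1
    refine ⟨1, one_ne_zero, ?_⟩
    have heq : vertexScattering A B 1 = vertexScattering A B (-1) :=
      h1 1 (-1) one_ne_zero (by norm_num)
    have hW1 := det_W A B hrank hherm (one_ne_zero (α := ℝ))
    have hWn1 := det_W A B hrank hherm (neg_ne_zero.mpr (one_ne_zero (α := ℝ)))
    have hprod : vertexScattering A B 1 * vertexScattering A B (-1) = 1 := by
      rw [vs_eq, vs_eq, neg_mul_neg, show -(-1 : ℝ) = 1 by norm_num]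
      calc (W A B 1)⁻¹ * W A B (-1) * ((W A B (-1))⁻¹ * W A B 1)
          = (W A B 1)⁻¹ * (W A B (-1) * (W A B (-1))⁻¹) * W A B 1 := by
            rw [Matrix.mul_assoc, Matrix.mul_assoc, Matrix.mul_assoc]
        _ = (W A B 1)⁻¹ * W A B 1 := by
            rw [Matrix.mul_nonsing_inv _ hWn1, Matrix.mul_one]
        _ = 1 := Matrix.nonsing_inv_mul _ hW1
    rw [pow_two, heq]
    nth_rewrite 1 [← heq]
    exact hprod
  tfae_finish
end

section
/- Let U be an n×n unitary complex matrix and set A = (1/2)(I − U) and B = (i/2)(I + U). Then the pair (A,B) has maximal rank, A B† is Hermitian, the matrix A − iB is invertible, and −(A − iB)⁻¹(A + iB) = U. -/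
open Matrix

lemma dirac_aux_key1 {n : ℕ} (U : Matrix (Fin n) (Fin n) ℂ) :
    (((1 / 2 : ℂ) • (1 - U)) - Complex.I • ((Complex.I / 2) • (1 + U))) = 1 := by
  have h : Complex.I * (Complex.I / 2) = -(1/2) := by
    rw [mul_div_assoc', Complex.I_mul_I]; ring
  simp only [smul_smul, smul_sub, smul_add, h]
  module

lemma dirac_aux_key2 {n : ℕ} (U : Matrix (Fin n) (Fin n) ℂ) :
    (((1 / 2 : ℂ) • (1 - U)) + Complex.I • ((Complex.I / 2) • (1 + U))) = -U := by
  have h : Complex.I * (Complex.I / 2) = -(1/2) := by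
    rw [mul_div_assoc', Complex.I_mul_I]; ring
  simp only [smul_smul, smul_sub, smul_add, h]
  module

theorem dirac_vertex_conditions_realize_unitary {n : ℕ}
    (U : Matrix (Fin n) (Fin n) ℂ) (hU : U ∈ Matrix.unitaryGroup (Fin n) ℂ) :
    (Matrix.fromCols ((1 / 2 : ℂ) • (1 - U)) ((Complex.I / 2) • (1 + U))).rank = n ∧
    (((1 / 2 : ℂ) • (1 - U)) * ((Complex.I / 2) • (1 + U))ᴴ).IsHermitian ∧
    IsUnit (((1 / 2 : ℂ) • (1 - U)) - Complex.I • ((Complex.I / 2) • (1 + U))) ∧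
    -((((1 / 2 : ℂ) • (1 - U)) - Complex.I • ((Complex.I / 2) • (1 + U)))⁻¹
        * (((1 / 2 : ℂ) • (1 - U)) + Complex.I • ((Complex.I / 2) • (1 + U)))) = U := by
  have hUU : U * Uᴴ = 1 := by
    have := (Matrix.mem_unitaryGroup_iff).mp hU
    simpa [star_eq_conjTranspose] using this
  refine ⟨?_, ?_, ?_, ?_⟩
  · set A := (1 / 2 : ℂ) • (1 - U)
    set B := (Complex.I / 2) • (1 + U)
    have h1 : fromCols A B * fromRows (1 : Matrix (Fin n) (Fin n) ℂ)
        ((-Complex.I) • (1 : Matrix (Fin n) (Fin n) ℂ)) = 1 := by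
      rw [fromCols_mul_fromRows]
      rw [mul_one, mul_smul_comm, mul_one, neg_smul, ← sub_eq_add_neg]
      exact dirac_aux_key1 U
    refine le_antisymm ?_ ?_
    · simpa using (fromCols A B).rank_le_card_height
    · calc n = (1 : Matrix (Fin n) (Fin n) ℂ).rank := by simp
        _ = (fromCols A B * fromRows (1 : Matrix (Fin n) (Fin n) ℂ)
            ((-Complex.I) • (1 : Matrix (Fin n) (Fin n) ℂ))).rank := by rw [h1]
        _ ≤ (fromCols A B).rank := rank_mul_le_left _ _
  · have hprod : ((1 / 2 : ℂ) • (1 - U)) * ((Complex.I / 2) • (1 + U))ᴴ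
        = (-(Complex.I)/4) • (Uᴴ - U) := by
      simp only [conjTranspose_smul, conjTranspose_add, conjTranspose_one, smul_mul_assoc,
        mul_smul_comm, sub_mul, mul_add, one_mul, mul_one, hUU, smul_smul, smul_sub, smul_add,
        Complex.star_def, Complex.conj_I, map_div₀, Complex.conj_ofNat]
      ring_nf
      module
    rw [hprod]
    unfold Matrix.IsHermitian
    simp [conjTranspose_smul, conjTranspose_sub, smul_sub, Complex.star_def, Complex.conj_I,
      map_div₀]
    module
  · rw [dirac_aux_key1]; exact isUnit_one
  · rw [dirac_aux_key1, dirac_aux_key2, inv_one, one_mul, neg_neg]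
end
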